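/- arXiv:2206.12253 — 5 statements merged into one kernel-verified Lean document; each statement's English description precedes it below -/
import Mathlib

section
/- Let X ⊆ Z ⊆ ℝ^d and let π: ℝ^d → ℝ^n be an affine map whose restriction to Z is injective. Then rc(X, Z) ≤ rc(π(X), π(Z)), where rc(A, B) denotes the minimal number of facets (inequalities) of a polyhedron P with P ∩ B = A. -/
open scoped BigOperators

/-- Relaxation complexity of `X` within `Y`: the minimal number of linear
    inequalities whose solution set intersected with `Y` equals `X` (⊤ if none). -/
noncomputable def rcIn (d : ℕ) (X Y : Set (Fin d → ℝ)) : ℕ∞ :=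
  ⨅ (k : ℕ) (_ : ∃ (A : Fin k → Fin d → ℝ) (b : Fin k → ℝ),
      {x ∈ Y | ∀ i, ∑ j, A i j * x j ≤ b i} = X), (k : ℕ∞)

lemma affine_decomp (d n : ℕ) (π : (Fin d → ℝ) →ᵃ[ℝ] (Fin n → ℝ)) (x : Fin d → ℝ)
    (j : Fin n) : π x j = (∑ m, π.linear (Pi.single m 1) j * x m) + π 0 j := by
  have h1 : π x = π.linear x + π 0 := by
    have := π.map_vadd 0 x
    simpa [vadd_eq_add] using this
  have h2 : π.linear x = ∑ m, x m • π.linear (Pi.single m 1) := by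
    conv_lhs => rw [← Finset.univ_sum_single x, map_sum]
    refine Finset.sum_congr rfl fun m _ => ?_
    have : Pi.single m (x m) = x m • (Pi.single m (1:ℝ) : Fin d → ℝ) := by
      funext j; by_cases h : j = m <;> simp [Pi.single_apply, h]
    rw [this, map_smul]
  rw [h1, h2]
  simp [Finset.sum_apply, mul_comm]

/-- On injective projections: if π is an affine map injective on Z and X ⊆ Z ⊆ ℝ^d,
    then rc(X, Z) ≤ rc(π(X), π(Z)). -/
theorem rc_le_of_injective_projection (d n : ℕ)
    (X Z : Set (Fin d → ℝ)) (hXZ : X ⊆ Z)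
    (π : (Fin d → ℝ) →ᵃ[ℝ] (Fin n → ℝ)) (hinj : Set.InjOn π Z) :
    rcIn d X Z ≤ rcIn n (π '' X) (π '' Z) := by
  refine le_iInf fun k => le_iInf fun h => ?_
  obtain ⟨A, b, hAb⟩ := h
  refine iInf₂_le k ⟨fun i m => ∑ j, A i j * π.linear (Pi.single m 1) j,
    fun i => b i - ∑ j, A i j * π 0 j, ?_⟩
  have key : ∀ (x : Fin d → ℝ) (i : Fin k),
      (∑ m, (∑ j, A i j * π.linear (Pi.single m 1) j) * x m ≤
        b i - ∑ j, A i j * π 0 j) ↔ (∑ j, A i j * π x j ≤ b i) := by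
    intro x i
    have : ∑ j, A i j * π x j
        = (∑ m, (∑ j, A i j * π.linear (Pi.single m 1) j) * x m) + ∑ j, A i j * π 0 j := by
      simp only [affine_decomp d n π x, mul_add, Finset.sum_add_distrib]
      simp only [Finset.mul_sum, Finset.sum_mul]
      congr 1
      rw [Finset.sum_comm]
      refine Finset.sum_congr rfl fun m _ => Finset.sum_congr rfl fun j _ => by ring
    rw [this]
    constructor <;> intro h' <;> linarith
  ext x
  simp only [Set.mem_setOf_eq]
  constructor
  · rintro ⟨hxZ, hineq⟩
    have hx : π x ∈ {y ∈ π '' Z | ∀ i, ∑ j, A i j * y j ≤ b i} := by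
      exact ⟨Set.mem_image_of_mem π hxZ, fun i => (key x i).mp (hineq i)⟩
    rw [hAb] at hx
    obtain ⟨x', hx'X, hx'eq⟩ := hx
    rwa [hinj (hXZ hx'X) hxZ hx'eq] at hx'X
  · intro hxX
    have hx : π x ∈ {y ∈ π '' Z | ∀ i, ∑ j, A i j * y j ≤ b i} := by
      rw [hAb]; exact Set.mem_image_of_mem π hxX
    exact ⟨hXZ hxX, fun i => (key x i).mpr (hx.2 i)⟩
end

section
/- Let X ⊂ ℤ^k and Y ⊂ ℤ^ℓ be nonempty finite full-dimensional sets (dim X = k, dim Y = ℓ, with k, ℓ > 0). Then rc(X ∗ Y) ≤ rc(X) + rc(Y), where X ∗ Y = {(x, 0, 0) : x ∈ X} ∪ {(0, y, 1) : y ∈ Y} ⊂ ℤ^{k+ℓ+1} is the free join. -/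
open scoped BigOperators

def intPts (d : ℕ) : Set (Fin d → ℝ) := {x | ∀ i, ∃ z : ℤ, x i = (z : ℝ)}

noncomputable def rc (d : ℕ) (X : Set (Fin d → ℝ)) : ℕ∞ := rcIn d X (intPts d)

/-- Embedding of the first block: x ↦ (x, 0, 0). -/
def joinL (k l : ℕ) (x : Fin k → ℝ) : Fin (k + l + 1) → ℝ :=
  fun j => if h : (j : ℕ) < k then x ⟨j, h⟩ else 0

/-- Embedding of the second block: y ↦ (0, y, 1). -/
def joinR (k l : ℕ) (y : Fin l → ℝ) : Fin (k + l + 1) → ℝ :=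
  fun j => if h1 : (j : ℕ) < k then 0
    else if h : (j : ℕ) < k + l then y ⟨(j : ℕ) - k, by omega⟩ else 1

/-- The free join X ∗ Y = {(x,0,0) : x ∈ X} ∪ {(0,y,1) : y ∈ Y}. -/
def freeJoin (k l : ℕ) (X : Set (Fin k → ℝ)) (Y : Set (Fin l → ℝ)) :
    Set (Fin (k + l + 1) → ℝ) :=
  (joinL k l '' X) ∪ (joinR k l '' Y)

/-! ### Auxiliary machinery -/

namespace RcFreeJoinAux

lemma exists_min_witness (P : ℕ → Prop) (h : (⨅ (m : ℕ) (_ : P m), (m : ℕ∞)) ≠ ⊤) :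
    ∃ m, P m ∧ (m : ℕ∞) ≤ ⨅ (m : ℕ) (_ : P m), (m : ℕ∞) := by
  have hex : ∃ m, P m := by
    by_contra hc
    push_neg at hc
    exact h (by simp [hc])
  exact ⟨sInf {m | P m}, Nat.sInf_mem hex,
    le_iInf fun m => le_iInf fun hm => Nat.cast_le.mpr (Nat.sInf_le hm)⟩

lemma eq_zero_of_recession {d m : ℕ} {A : Fin m → Fin d → ℝ} {b : Fin m → ℝ}
    {X : Set (Fin d → ℝ)} (hX : {x ∈ intPts d | ∀ i, ∑ j, A i j * x j ≤ b i} = X)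
    (hfin : X.Finite) {x0 : Fin d → ℝ} (hx0 : x0 ∈ X)
    {u : Fin d → ℝ} (hu : u ∈ intPts d) (hAu : ∀ i, ∑ j, A i j * u j ≤ 0) :
    u = 0 := by
  by_contra hne
  obtain ⟨j0, hj0⟩ : ∃ j, u j ≠ 0 := by
    by_contra hc; push_neg at hc; exact hne (funext hc)
  have hx0' : x0 ∈ intPts d ∧ ∀ i, ∑ j, A i j * x0 j ≤ b i := by
    rw [← hX] at hx0; exact hx0
  have hmem : ∀ t : ℕ, (fun j => x0 j + t * u j) ∈ X := by
    intro t
    rw [← hX]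
    refine ⟨fun i => ?_, fun i => ?_⟩
    · obtain ⟨z1, hz1⟩ := hx0'.1 i
      obtain ⟨z2, hz2⟩ := hu i
      exact ⟨z1 + t * z2, by push_cast [hz1, hz2]; ring⟩
    · have hsum : ∑ j, A i j * (x0 j + t * u j)
          = (∑ j, A i j * x0 j) + t * ∑ j, A i j * u j := by
        rw [Finset.mul_sum, ← Finset.sum_add_distrib]
        exact Finset.sum_congr rfl fun j _ => by ring
      rw [hsum]
      have h2 : (t : ℝ) * ∑ j, A i j * u j ≤ 0 :=
        mul_nonpos_of_nonneg_of_nonpos (by positivity) (hAu i)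
      linarith [hx0'.2 i]
  have hinj : Function.Injective (fun t : ℕ => (fun j => x0 j + t * u j : Fin d → ℝ)) := by
    intro s t hst
    have h1 := congrFun hst j0
    simp only at h1
    have h2 : (s : ℝ) * u j0 = (t : ℝ) * u j0 := by linarith
    exact_mod_cast mul_right_cancel₀ hj0 h2
  exact hfin.not_infinite (Set.infinite_of_injective_forall_mem hinj hmem)

lemma subset_singleton_of_tight {d m : ℕ} {A : Fin m → Fin d → ℝ} {b : Fin m → ℝ}
    {X : Set (Fin d → ℝ)} (hX : {x ∈ intPts d | ∀ i, ∑ j, A i j * x j ≤ b i} = X)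
    (hfin : X.Finite) {x0 : Fin d → ℝ} (hx0 : x0 ∈ X)
    (hb : ∀ i, b i ≤ ∑ j, A i j * x0 j) : X ⊆ {x0} := by
  intro x1 hx1
  by_contra hne
  have hne' : x1 ≠ x0 := by simpa using hne
  obtain ⟨j0, hj0⟩ : ∃ j, x1 j - x0 j ≠ 0 := by
    by_contra hc; push_neg at hc
    exact hne' (funext fun j => by have := hc j; linarith)
  have hx0' : x0 ∈ intPts d ∧ ∀ i, ∑ j, A i j * x0 j ≤ b i := by
    rw [← hX] at hx0; exact hx0
  have hx1' : x1 ∈ intPts d ∧ ∀ i, ∑ j, A i j * x1 j ≤ b i := by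
    rw [← hX] at hx1; exact hx1
  have hmem : ∀ t : ℕ, (fun j => x0 j + t * (x1 j - x0 j)) ∈ X := by
    intro t
    rw [← hX]
    refine ⟨fun i => ?_, fun i => ?_⟩
    · obtain ⟨z1, hz1⟩ := hx0'.1 i
      obtain ⟨z2, hz2⟩ := hx1'.1 i
      exact ⟨z1 + t * (z2 - z1), by push_cast [hz1, hz2]; ring⟩
    · have hsum : ∑ j, A i j * (x0 j + t * (x1 j - x0 j))
          = (∑ j, A i j * x0 j) + t * ((∑ j, A i j * x1 j) - ∑ j, A i j * x0 j) := by
        simp only [mul_sub, Finset.mul_sum, ← Finset.sum_sub_distrib, ← Finset.sum_add_distrib]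
        exact Finset.sum_congr rfl fun j _ => by ring
      rw [hsum]
      have hd : (∑ j, A i j * x1 j) - ∑ j, A i j * x0 j ≤ 0 := by
        have := hx1'.2 i; have := hb i; linarith
      have h2 : (t : ℝ) * ((∑ j, A i j * x1 j) - ∑ j, A i j * x0 j) ≤ 0 :=
        mul_nonpos_of_nonneg_of_nonpos (by positivity) hd
      linarith [hx0'.2 i]
  have hinj : Function.Injective
      (fun t : ℕ => (fun j => x0 j + t * (x1 j - x0 j) : Fin d → ℝ)) := by
    intro s t hst
    have h1 := congrFun hst j0
    simp only at h1
    have h2 : (s : ℝ) * (x1 j0 - x0 j0) = (t : ℝ) * (x1 j0 - x0 j0) := by linarith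
    exact_mod_cast mul_right_cancel₀ hj0 h2
  exact hfin.not_infinite (Set.infinite_of_injective_forall_mem hinj hmem)

lemma affineSpan_singleton_ne_top {d : ℕ} (hd : 0 < d) (x0 : Fin d → ℝ) :
    affineSpan ℝ ({x0} : Set (Fin d → ℝ)) ≠ ⊤ := by
  intro h
  have h1 := congrArg AffineSubspace.direction h
  rw [direction_affineSpan, vectorSpan_singleton, AffineSubspace.direction_top] at h1
  have h2 : (fun _ => (1:ℝ) : Fin d → ℝ) ∈ (⊥ : Submodule ℝ (Fin d → ℝ)) := by
    rw [h1]; trivial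
  rw [Submodule.mem_bot] at h2
  have := congrFun h2 ⟨0, hd⟩
  norm_num at this

def px (k l : ℕ) (w : Fin (k + l + 1) → ℝ) : Fin k → ℝ :=
  fun j => w ⟨j.1, by exact lt_of_lt_of_le j.2 (by omega)⟩
def py (k l : ℕ) (w : Fin (k + l + 1) → ℝ) : Fin l → ℝ :=
  fun j => w ⟨k + j.1, by have := j.2; omega⟩
def pz (k l : ℕ) (w : Fin (k + l + 1) → ℝ) : ℝ := w ⟨k + l, by omega⟩

def row (k l : ℕ) (a : Fin k → ℝ) (c : Fin l → ℝ) (e : ℝ) : Fin (k + l + 1) → ℝ :=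
  fun j => if hj : (j : ℕ) < k then a ⟨j, hj⟩
    else if hj2 : (j : ℕ) < k + l then c ⟨(j : ℕ) - k, by omega⟩ else e

lemma sum_split {k l : ℕ} (g : Fin (k + l + 1) → ℝ) :
    ∑ j, g j = (∑ j : Fin k, g ⟨j.1, by exact lt_of_lt_of_le j.2 (by omega)⟩)
      + (∑ j : Fin l, g ⟨k + j.1, by have := j.2; omega⟩) + g ⟨k + l, by omega⟩ := by
  rw [Fin.sum_univ_castSucc, Fin.sum_univ_add]
  rfl

lemma row_apply_left {k l : ℕ} (a : Fin k → ℝ) (c : Fin l → ℝ) (e : ℝ) (j : Fin k)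
    (h : (j : ℕ) < k + l + 1) : row k l a c e ⟨j.1, h⟩ = a j := by
  simp only [row]
  rw [dif_pos j.2]

lemma row_apply_mid {k l : ℕ} (a : Fin k → ℝ) (c : Fin l → ℝ) (e : ℝ) (j : Fin l)
    (h : k + (j : ℕ) < k + l + 1) : row k l a c e ⟨k + j.1, h⟩ = c j := by
  simp only [row]
  rw [dif_neg (show ¬ k + (j:ℕ) < k by omega),
    dif_pos (show k + (j:ℕ) < k + l by have := j.2; omega)]
  congr 1
  exact Fin.ext (by simp)

lemma row_apply_last {k l : ℕ} (a : Fin k → ℝ) (c : Fin l → ℝ) (e : ℝ)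
    (h : k + l < k + l + 1) : row k l a c e ⟨k + l, h⟩ = e := by
  simp only [row]
  rw [dif_neg (show ¬ k + l < k by omega), dif_neg (show ¬ k + l < k + l by omega)]

lemma row_sum {k l : ℕ} (a : Fin k → ℝ) (c : Fin l → ℝ) (e : ℝ) (w : Fin (k + l + 1) → ℝ) :
    (∑ j, row k l a c e j * w j)
      = (∑ j : Fin k, a j * px k l w j) + (∑ j : Fin l, c j * py k l w j) + e * pz k l w := by
  rw [sum_split (g := fun j => row k l a c e j * w j)]
  congr 1
  · congr 1
    · exact Finset.sum_congr rfl fun j _ => by rw [row_apply_left]; rfl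
    · exact Finset.sum_congr rfl fun j _ => by rw [row_apply_mid]; rfl
  · rw [row_apply_last]; rfl

lemma px_joinL {k l : ℕ} (x : Fin k → ℝ) : px k l (joinL k l x) = x := by
  funext j
  simp only [px, joinL]
  rw [dif_pos j.2]

lemma py_joinL {k l : ℕ} (x : Fin k → ℝ) : py k l (joinL k l x) = 0 := by
  funext j
  simp only [py, joinL]
  rw [dif_neg (show ¬ k + j.1 < k by omega)]
  rfl

lemma pz_joinL {k l : ℕ} (x : Fin k → ℝ) : pz k l (joinL k l x) = 0 := by
  simp only [pz, joinL]
  rw [dif_neg (show ¬ k + l < k by omega)]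

lemma px_joinR {k l : ℕ} (y : Fin l → ℝ) : px k l (joinR k l y) = 0 := by
  funext j
  simp only [px, joinR]
  rw [dif_pos j.2]
  rfl

lemma py_joinR {k l : ℕ} (y : Fin l → ℝ) : py k l (joinR k l y) = y := by
  funext j
  simp only [py, joinR]
  rw [dif_neg (show ¬ k + j.1 < k by omega),
    dif_pos (show k + j.1 < k + l by have := j.2; omega)]
  congr 1
  exact Fin.ext (by simp)

lemma pz_joinR {k l : ℕ} (y : Fin l → ℝ) : pz k l (joinR k l y) = 1 := by
  simp only [pz, joinR]
  rw [dif_neg (show ¬ k + l < k by omega), dif_neg (show ¬ k + l < k + l by omega)]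

lemma eq_joinL {k l : ℕ} (w : Fin (k + l + 1) → ℝ) (hy : py k l w = 0) (hz : pz k l w = 0) :
    joinL k l (px k l w) = w := by
  funext j
  simp only [joinL]
  by_cases hj : (j : ℕ) < k
  · rw [dif_pos hj]; rfl
  · rw [dif_neg hj]
    by_cases hj2 : (j : ℕ) < k + l
    · have h1 := congrFun hy ⟨(j : ℕ) - k, by omega⟩
      simp only [py, Pi.zero_apply] at h1
      rw [← h1]
      congr 1
      exact Fin.ext (by simp; omega)
    · have hjv : j = ⟨k + l, by omega⟩ := Fin.ext (by have := j.2; simp; omega)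
      rw [hjv]
      exact hz.symm

lemma eq_joinR {k l : ℕ} (w : Fin (k + l + 1) → ℝ) (hx : px k l w = 0) (hz : pz k l w = 1) :
    joinR k l (py k l w) = w := by
  funext j
  simp only [joinR]
  by_cases hj : (j : ℕ) < k
  · rw [dif_pos hj]
    have h1 := congrFun hx ⟨(j : ℕ), hj⟩
    simp only [px, Pi.zero_apply] at h1
    rw [← h1]
  · rw [dif_neg hj]
    by_cases hj2 : (j : ℕ) < k + l
    · rw [dif_pos hj2]
      simp only [py]
      congr 1
      exact Fin.ext (by simp; omega)
    · rw [dif_neg hj2]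
      have hjv : j = ⟨k + l, by omega⟩ := Fin.ext (by have := j.2; simp; omega)
      rw [hjv]
      exact hz.symm

lemma join_witness {k l m n : ℕ} (hk : 0 < k) (hl : 0 < l)
    {X : Set (Fin k → ℝ)} {Y : Set (Fin l → ℝ)}
    (hXne : X.Nonempty) (hYne : Y.Nonempty) (hXfin : X.Finite) (hYfin : Y.Finite)
    (hXdim : affineSpan ℝ X = ⊤) (hYdim : affineSpan ℝ Y = ⊤)
    (A : Fin m → Fin k → ℝ) (b : Fin m → ℝ)
    (hA : {x ∈ intPts k | ∀ i, ∑ j, A i j * x j ≤ b i} = X)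
    (C : Fin n → Fin l → ℝ) (dd : Fin n → ℝ)
    (hC : {y ∈ intPts l | ∀ i, ∑ j, C i j * y j ≤ dd i} = Y) :
    ∃ (E : Fin (m + n) → Fin (k + l + 1) → ℝ) (f : Fin (m + n) → ℝ),
      {w ∈ intPts (k + l + 1) | ∀ i, ∑ j, E i j * w j ≤ f i} = freeJoin k l X Y := by
  obtain ⟨x0, hx0mem⟩ := hXne
  obtain ⟨y0, hy0mem⟩ := hYne
  have hx0' : x0 ∈ intPts k ∧ ∀ i, ∑ j, A i j * x0 j ≤ b i := by
    rw [← hA] at hx0mem; exact hx0mem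
  have hy0' : y0 ∈ intPts l ∧ ∀ i, ∑ j, C i j * y0 j ≤ dd i := by
    rw [← hC] at hy0mem; exact hy0mem
  refine ⟨Fin.append (fun i => row k l (A i) 0 (b i)) (fun i => row k l 0 (C i) (-(dd i))),
    Fin.append b (fun _ => 0), ?_⟩
  ext w
  simp only [Set.mem_sep_iff]
  constructor
  · rintro ⟨hwint, hineq⟩
    have h1 : ∀ i : Fin m, ∑ j, A i j * px k l w j ≤ b i * (1 - pz k l w) := by
      intro i
      have hthis := hineq (Fin.castAdd n i)
      simp only [Fin.append_left] at hthis
      rw [row_sum] at hthis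
      simp only [Pi.zero_apply, zero_mul, Finset.sum_const_zero] at hthis
      linarith
    have h2 : ∀ i : Fin n, ∑ j, C i j * py k l w j ≤ dd i * pz k l w := by
      intro i
      have hthis := hineq (Fin.natAdd m i)
      simp only [Fin.append_right] at hthis
      rw [row_sum] at hthis
      simp only [Pi.zero_apply, zero_mul, Finset.sum_const_zero] at hthis
      linarith
    obtain ⟨zi, hzi⟩ := hwint ⟨k + l, by omega⟩
    have hz : pz k l w = (zi : ℝ) := hzi
    have hxint : px k l w ∈ intPts k := fun j => hwint _
    have hyint : py k l w ∈ intPts l := fun j => hwint _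
    obtain hzc | hzc | hzc | hzc : zi ≤ -1 ∨ zi = 0 ∨ zi = 1 ∨ 2 ≤ zi := by omega
    · -- z ≤ -1 : contradiction via Y
      exfalso
      have hzr : (zi : ℝ) ≤ -1 := by exact_mod_cast hzc
      set v : Fin l → ℝ := fun j => py k l w j + (-(zi : ℝ)) * y0 j with hv
      have hvint : v ∈ intPts l := by
        intro j
        obtain ⟨a1, ha1⟩ := hyint j
        obtain ⟨a2, ha2⟩ := hy0'.1 j
        exact ⟨a1 + (-zi) * a2, by simp only [hv]; push_cast [ha1, ha2]; ring⟩
      have hCv : ∀ i, ∑ j, C i j * v j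
          ≤ (zi : ℝ) * (dd i - ∑ j, C i j * y0 j) := by
        intro i
        have hexp : ∑ j, C i j * v j
            = (∑ j, C i j * py k l w j) + (-(zi : ℝ)) * ∑ j, C i j * y0 j := by
          simp only [hv, mul_add, Finset.mul_sum, ← Finset.sum_add_distrib]
          exact Finset.sum_congr rfl fun j _ => by ring
        rw [hexp]
        have hthis := h2 i
        rw [hz] at hthis
        linarith
      have hCv0 : ∀ i, ∑ j, C i j * v j ≤ 0 := by
        intro i
        refine le_trans (hCv i) ?_
        have := hy0'.2 i
        nlinarith
      have hv0 : v = 0 := eq_zero_of_recession hC hYfin hy0mem hvint hCv0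
      have hbt : ∀ i, dd i ≤ ∑ j, C i j * y0 j := by
        intro i
        have hthis := hCv i
        rw [hv0] at hthis
        simp only [Pi.zero_apply, mul_zero, Finset.sum_const_zero] at hthis
        nlinarith
      have hsub := subset_singleton_of_tight hC hYfin hy0mem hbt
      have hYeq : Y = {y0} := Set.eq_singleton_iff_unique_mem.mpr
        ⟨hy0mem, fun y' hy' => hsub hy'⟩
      exact affineSpan_singleton_ne_top hl y0 (hYeq ▸ hYdim)
    · -- z = 0 : point of the X block
      have hz0 : pz k l w = 0 := by rw [hz, hzc]; norm_num
      have hxX : px k l w ∈ X := by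
        rw [← hA]
        exact ⟨hxint, fun i => by have := h1 i; rw [hz0] at this; linarith⟩
      have hy0eq : py k l w = 0 :=
        eq_zero_of_recession hC hYfin hy0mem hyint
          (fun i => by have := h2 i; rw [hz0] at this; linarith)
      exact Or.inl ⟨px k l w, hxX, eq_joinL w hy0eq hz0⟩
    · -- z = 1 : point of the Y block
      have hz1 : pz k l w = 1 := by rw [hz, hzc]; norm_num
      have hyY : py k l w ∈ Y := by
        rw [← hC]
        exact ⟨hyint, fun i => by have := h2 i; rw [hz1] at this; linarith⟩
      have hx0eq : px k l w = 0 :=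
        eq_zero_of_recession hA hXfin hx0mem hxint
          (fun i => by have := h1 i; rw [hz1] at this; linarith)
      exact Or.inr ⟨py k l w, hyY, eq_joinR w hx0eq hz1⟩
    · -- z ≥ 2 : contradiction via X
      exfalso
      have hzr : (2 : ℝ) ≤ (zi : ℝ) := by exact_mod_cast hzc
      set u : Fin k → ℝ := fun j => px k l w j + ((zi : ℝ) - 1) * x0 j with hu
      have huint : u ∈ intPts k := by
        intro j
        obtain ⟨a1, ha1⟩ := hxint j
        obtain ⟨a2, ha2⟩ := hx0'.1 j
        exact ⟨a1 + (zi - 1) * a2, by simp only [hu]; push_cast [ha1, ha2]; ring⟩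
      have hAu : ∀ i, ∑ j, A i j * u j
          ≤ ((zi : ℝ) - 1) * ((∑ j, A i j * x0 j) - b i) := by
        intro i
        have hexp : ∑ j, A i j * u j
            = (∑ j, A i j * px k l w j) + ((zi : ℝ) - 1) * ∑ j, A i j * x0 j := by
          simp only [hu, mul_add, Finset.mul_sum, ← Finset.sum_add_distrib]
          exact Finset.sum_congr rfl fun j _ => by ring
        rw [hexp]
        have hthis := h1 i
        rw [hz] at hthis
        linarith
      have hAu0 : ∀ i, ∑ j, A i j * u j ≤ 0 := by
        intro i
        refine le_trans (hAu i) ?_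
        have := hx0'.2 i
        nlinarith
      have hu0 : u = 0 := eq_zero_of_recession hA hXfin hx0mem huint hAu0
      have hbt : ∀ i, b i ≤ ∑ j, A i j * x0 j := by
        intro i
        have hthis := hAu i
        rw [hu0] at hthis
        simp only [Pi.zero_apply, mul_zero, Finset.sum_const_zero] at hthis
        nlinarith
      have hsub := subset_singleton_of_tight hA hXfin hx0mem hbt
      have hXeq : X = {x0} := Set.eq_singleton_iff_unique_mem.mpr
        ⟨hx0mem, fun x' hx' => hsub hx'⟩
      exact affineSpan_singleton_ne_top hk x0 (hXeq ▸ hXdim)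
  · rintro (⟨x, hxX, rfl⟩ | ⟨y, hyY, rfl⟩)
    · have hx' : x ∈ intPts k ∧ ∀ i, ∑ j, A i j * x j ≤ b i := by
        rw [← hA] at hxX; exact hxX
      refine ⟨?_, ?_⟩
      · intro j
        simp only [joinL]
        by_cases hj : (j : ℕ) < k
        · rw [dif_pos hj]; exact hx'.1 _
        · rw [dif_neg hj]; exact ⟨0, by norm_num⟩
      · intro i
        refine Fin.addCases (fun i => ?_) (fun i => ?_) i
        · simp only [Fin.append_left]
          rw [row_sum, px_joinL, py_joinL, pz_joinL]
          simp only [Pi.zero_apply, zero_mul, Finset.sum_const_zero, mul_zero, add_zero]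
          exact hx'.2 i
        · simp only [Fin.append_right]
          rw [row_sum, px_joinL, py_joinL, pz_joinL]
          simp
    · have hy' : y ∈ intPts l ∧ ∀ i, ∑ j, C i j * y j ≤ dd i := by
        rw [← hC] at hyY; exact hyY
      refine ⟨?_, ?_⟩
      · intro j
        simp only [joinR]
        by_cases hj : (j : ℕ) < k
        · rw [dif_pos hj]; exact ⟨0, by norm_num⟩
        · rw [dif_neg hj]
          by_cases hj2 : (j : ℕ) < k + l
          · rw [dif_pos hj2]; exact hy'.1 _
          · rw [dif_neg hj2]; exact ⟨1, by norm_num⟩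
      · intro i
        refine Fin.addCases (fun i => ?_) (fun i => ?_) i
        · simp only [Fin.append_left]
          rw [row_sum, px_joinR, py_joinR, pz_joinR]
          simp only [Pi.zero_apply, zero_mul, mul_zero, Finset.sum_const_zero, mul_one,
            zero_add, add_zero]
          exact le_refl _
        · simp only [Fin.append_right]
          rw [row_sum, px_joinR, py_joinR, pz_joinR]
          simp only [Pi.zero_apply, zero_mul, Finset.sum_const_zero, mul_one, zero_add, add_zero]
          linarith [hy'.2 i]

end RcFreeJoinAux

open RcFreeJoinAux in
/-- Sub-additivity of the relaxation complexity under free joins. -/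
theorem rc_freeJoin_le (k l : ℕ) (hk : 0 < k) (hl : 0 < l)
    (X : Set (Fin k → ℝ)) (Y : Set (Fin l → ℝ))
    (hXne : X.Nonempty) (hYne : Y.Nonempty)
    (hXfin : X.Finite) (hYfin : Y.Finite)
    (hXint : X ⊆ intPts k) (hYint : Y ⊆ intPts l)
    (hXdim : affineSpan ℝ X = ⊤) (hYdim : affineSpan ℝ Y = ⊤) :
    rc (k + l + 1) (freeJoin k l X Y) ≤ rc k X + rc l Y := by
  by_cases hX : rc k X = ⊤
  · rw [hX, top_add]; exact le_top
  by_cases hY : rc l Y = ⊤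
  · rw [hY, add_top]; exact le_top
  obtain ⟨m, ⟨A, b, hA⟩, hmle⟩ := exists_min_witness _ hX
  obtain ⟨n, ⟨C, dd, hC⟩, hnle⟩ := exists_min_witness _ hY
  obtain ⟨E, f, hEf⟩ := join_witness hk hl hXne hYne hXfin hYfin hXdim hYdim A b hA C dd hC
  have hle : rc (k + l + 1) (freeJoin k l X Y) ≤ ((m + n : ℕ) : ℕ∞) :=
    iInf₂_le (m + n) ⟨E, f, hEf⟩
  calc rc (k + l + 1) (freeJoin k l X Y) ≤ ((m + n : ℕ) : ℕ∞) := hle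
    _ = (m : ℕ∞) + (n : ℕ∞) := by push_cast; rfl
    _ ≤ rc k X + rc l Y := add_le_add hmle hnle
end

section
/- For every d ≥ 1, rc(Δ_{d+1}) ≤ rc(Δ_d) + 1. Combined with monotonicity rc(Δ_d) ≤ rc(Δ_{d+1}), it follows that the sequence (rc(Δ_d))_d increases by either 0 or 1 at each step. -/
open scoped BigOperators

def stdDelta (d : ℕ) : Set (Fin d → ℝ) :=
  insert 0 (Set.range fun i : Fin d => fun j => if j = i then (1 : ℝ) else 0)

-- unit vector with value c
lemma sum_mul_unit {d : ℕ} (a : Fin d → ℝ) (q : Fin d) (c : ℝ) :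
    ∑ j, a j * (if j = q then c else 0) = a q * c := by
  simp [mul_ite, Finset.sum_ite_eq']

lemma unit_intPts {d : ℕ} (q : Fin d) (c : ℤ) :
    (fun j => if j = q then (c : ℝ) else 0) ∈ intPts d := by
  intro i
  by_cases h : i = q
  · exact ⟨c, by simp [h]⟩
  · exact ⟨0, by simp [h]⟩

lemma two_not_mem {d : ℕ} (q : Fin d) :
    (fun j => if j = q then (2 : ℝ) else 0) ∉ stdDelta d := by
  rintro (h | ⟨p, h⟩)
  · have := congrFun h q
    simp at this
  · have := congrFun h q
    by_cases hq : q = p <;> simp [hq] at this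

lemma relax_step {d k : ℕ} (hd : 1 ≤ d) (A : Fin k → Fin d → ℝ) (b : Fin k → ℝ)
    (H : {x ∈ intPts d | ∀ i, ∑ j, A i j * x j ≤ b i} = stdDelta d) :
    ∃ (A' : Fin (k+1) → Fin (d+1) → ℝ) (b' : Fin (k+1) → ℝ),
      {x ∈ intPts (d+1) | ∀ i, ∑ j, A' i j * x j ≤ b' i} = stdDelta (d+1) := by
  have Hmem : ∀ x : Fin d → ℝ,
      (x ∈ intPts d ∧ ∀ i, ∑ j, A i j * x j ≤ b i) ↔ x ∈ stdDelta d := by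
    intro x; exact Set.ext_iff.mp H x
  -- b ≥ 0
  have hb0 : ∀ i, 0 ≤ b i := by
    intro i
    have h0 : (0 : Fin d → ℝ) ∈ stdDelta d := Set.mem_insert _ _
    have := ((Hmem 0).mpr h0).2 i
    simpa using this
  -- A i q ≤ b i
  have hAe : ∀ (q : Fin d) (i : Fin k), A i q ≤ b i := by
    intro q i
    have hq : (fun j => if j = q then (1 : ℝ) else 0) ∈ stdDelta d :=
      Set.mem_insert_iff.mpr (Or.inr ⟨q, rfl⟩)
    have := ((Hmem _).mpr hq).2 i
    rw [sum_mul_unit] at this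
    linarith
  refine ⟨Fin.snoc (fun i => Fin.snoc (A i) (b i)) (Fin.snoc 0 (-1)),
    Fin.snoc b 0, ?_⟩
  ext x
  set z : ℝ := x (Fin.last d) with hz
  set y : Fin d → ℝ := fun j => x (Fin.castSucc j) with hy
  have hsum : ∀ i : Fin k,
      ∑ j, (Fin.snoc (A i) (b i) : Fin (d+1) → ℝ) j * x j = (∑ j, A i j * y j) + b i * z := by
    intro i
    rw [Fin.sum_univ_castSucc]
    simp [hy, hz]
  have hsumlast : ∑ j, (Fin.snoc (0 : Fin d → ℝ) (-1) : Fin (d+1) → ℝ) j * x j = -z := by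
    rw [Fin.sum_univ_castSucc]
    simp [hz]
  constructor
  · rintro ⟨hint, hineq⟩
    -- last row: -z ≤ 0
    have hzle : 0 ≤ z := by
      have := hineq (Fin.last k)
      rw [Fin.snoc_last, hsumlast, Fin.snoc_last] at this
      linarith
    have hrow : ∀ i : Fin k, (∑ j, A i j * y j) + b i * z ≤ b i := by
      intro i
      have := hineq (Fin.castSucc i)
      rwa [Fin.snoc_castSucc, hsum, Fin.snoc_castSucc] at this
    have hyint : y ∈ intPts d := fun j => hint (Fin.castSucc j)
    obtain ⟨m, hm⟩ := hint (Fin.last d)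
    rw [← hz] at hm
    have hm0 : 0 ≤ m := by exact_mod_cast hm ▸ hzle
    -- y satisfies Ay ≤ b hence y ∈ stdDelta d
    have hyD : y ∈ stdDelta d := by
      refine (Hmem y).mp ⟨hyint, fun i => ?_⟩
      have hri := hrow i
      rcases eq_or_lt_of_le hm0 with h0 | h1
      · have hz0 : z = 0 := by rw [hm, ← h0]; norm_num
        rw [hz0] at hri; linarith
      · have hz1 : 1 ≤ z := by rw [hm]; exact_mod_cast h1
        nlinarith [hb0 i, mul_nonneg (hb0 i) (by linarith : (0:ℝ) ≤ z - 1)]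
    -- now case on m
    rcases eq_or_lt_of_le hm0 with h0 | h1
    · -- z = 0 : x = (y, 0)
      have hz0 : z = 0 := by rw [hm, ← h0]; norm_num
      rcases hyD with h | ⟨q, hq⟩
      · left
        funext j
        refine Fin.lastCases ?_ ?_ j
        · simpa [hz] using hz0
        · intro j; exact congrFun h j
      · right
        refine ⟨Fin.castSucc q, ?_⟩
        funext j
        refine Fin.lastCases ?_ ?_ j
        · simp only [← hz, hz0]
          have : Fin.last d ≠ Fin.castSucc q := (Fin.castSucc_lt_last q).ne'
          simp [this]
        · intro j
          have hqj := congrFun hq j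
          simp only [hy] at hqj
          rw [← hqj]
          simp [Fin.castSucc_inj]
    · -- z ≥ 1
      have hz1 : 1 ≤ z := by rw [hm]; exact_mod_cast h1
      -- show y = 0
      have hy0 : y = 0 := by
        rcases hyD with h | ⟨q, hq⟩
        · exact h
        · exfalso
          -- A i q ≤ b i (1 - z) ≤ 0, so 2 e_q is feasible
          apply two_not_mem q
          refine (Hmem _).mp ⟨unit_intPts q 2, fun i => ?_⟩
          rw [sum_mul_unit]
          have hrowi := hrow i
          rw [← hq, sum_mul_unit, mul_one] at hrowi
          nlinarith [hb0 i, mul_nonneg (hb0 i) (by linarith : (0:ℝ) ≤ z - 1)]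
      -- constraints: b i * z ≤ b i
      have hbz : ∀ i, b i * z ≤ b i := by
        intro i
        have := hrow i
        rw [hy0] at this
        simpa using this
      -- z = 1
      have hz1' : z = 1 := by
        by_contra hne
        have hm1 : m ≠ 1 := fun h => hne (by rw [hm, h]; norm_num)
        have hmge : 1 ≤ m := by exact_mod_cast hm ▸ hz1
        have hm2 : 2 ≤ m := by omega
        have hz2 : (2:ℝ) ≤ z := by rw [hm]; exact_mod_cast hm2
        -- b i = 0 for all i
        have hb_zero : ∀ i, b i = 0 := by
          intro i
          nlinarith [hbz i, hb0 i]
        -- contradiction via 2 e_0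
        have q0 : Fin d := ⟨0, hd⟩
        apply two_not_mem (⟨0, hd⟩ : Fin d)
        refine (Hmem _).mp ⟨unit_intPts _ 2, fun i => ?_⟩
        rw [sum_mul_unit]
        have := hAe ⟨0, hd⟩ i
        rw [hb_zero i] at this ⊢
        linarith
      -- x = e_last
      right
      refine ⟨Fin.last d, ?_⟩
      funext j
      refine Fin.lastCases ?_ ?_ j
      · simp [← hz, hz1']
      · intro j
        have := congrFun hy0 j
        simp only [hy] at this
        rw [this]
        have : Fin.castSucc j ≠ Fin.last d := (Fin.castSucc_lt_last j).ne
        simp [this]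
  · -- stdDelta (d+1) ⊆ relaxation
    rintro (h | ⟨p, hp⟩)
    · refine ⟨fun i => ⟨0, by rw [h]; simp⟩, fun i => ?_⟩
      refine Fin.lastCases ?_ (fun i => ?_) i
      · rw [Fin.snoc_last, Fin.snoc_last, hsumlast, hz, h]
        simp
      · rw [Fin.snoc_castSucc, Fin.snoc_castSucc, hsum i]
        have hy0 : y = 0 := by funext j; show x j.castSucc = 0; rw [h]; simp
        rw [hy0, hz, h]
        simpa using hb0 i
    · have hy' : ∀ j : Fin d, y j = if Fin.castSucc j = p then (1:ℝ) else 0 := by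
        intro j
        show x j.castSucc = _
        exact (congrFun hp _).symm
      have hz' : z = if Fin.last d = p then (1:ℝ) else 0 := (congrFun hp (Fin.last d)).symm
      refine ⟨?_, fun i => ?_⟩
      · rw [← hp]
        simpa using unit_intPts p (1:ℤ)
      · refine Fin.lastCases ?_ (fun i => ?_) i
        · rw [Fin.snoc_last, Fin.snoc_last, hsumlast, hz']
          split <;> norm_num
        · rw [Fin.snoc_castSucc, Fin.snoc_castSucc, hsum i]
          rcases Fin.eq_castSucc_or_eq_last p with ⟨q, rfl⟩ | rfl
          · have hyy : y = fun j => if j = q then (1:ℝ) else 0 := by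
              funext j; rw [hy' j]; simp [Fin.castSucc_inj]
            have hz0 : z = 0 := by
              rw [hz']; simp [(Fin.castSucc_lt_last q).ne']
            rw [hyy, sum_mul_unit, hz0, mul_one, mul_zero, add_zero]
            exact hAe q i
          · have hz1 : z = 1 := by rw [hz']; simp
            have hs : ∑ j, A i j * y j = 0 := by
              apply Finset.sum_eq_zero
              intro j _
              rw [hy' j]
              simp [(Fin.castSucc_lt_last j).ne]
            rw [hs, hz1]
            simp

/-- rc(Δ_{d+1}) ≤ rc(Δ_d) + 1. -/
theorem rc_stdDelta_succ_le (d : ℕ) (hd : 1 ≤ d) :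
    rc (d + 1) (stdDelta (d + 1)) ≤ rc d (stdDelta d) + 1 := by
  by_cases htop : rc d (stdDelta d) = ⊤
  · rw [htop]; exact le_top
  · have hlt : rc d (stdDelta d) < rc d (stdDelta d) + 1 :=
      (ENat.lt_add_one_iff htop).mpr le_rfl
    rw [rc, rcIn] at hlt
    obtain ⟨k, hk⟩ := iInf_lt_iff.mp hlt
    obtain ⟨hwit, hklt⟩ := iInf_lt_iff.mp hk
    obtain ⟨A, b, H⟩ := hwit
    obtain ⟨A', b', H'⟩ := relax_step hd A b H
    calc rc (d+1) (stdDelta (d+1)) ≤ ((k+1 : ℕ) : ℕ∞) := by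
          rw [rc, rcIn]
          exact iInf₂_le (k+1) ⟨A', b', H'⟩
      _ ≤ rc d (stdDelta d) + 1 := by
          push_cast
          exact add_le_add (Order.le_of_lt_add_one hklt) le_rfl
end

section
/- Let h(x_1,…,x_k) = (2x_k − 1)·(Σ_{i=1}^{k−1} x_i)^2 on {0,1}^k, and let π be a permutation of [k−1]. Then the inequality x_{k+1} ≤ Σ_{i=1}^{k−1} (2i − 1) x_{π(i)} is valid for every point (x, h(x)) with x ∈ {0,1}^k, and holds with equality exactly for the points (0,0), (e_k, 0), and (e_k + Σ_{i=1}^t e_{π(i)}, t²) for t = 1,…,k−1. -/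
open scoped BigOperators

def cube (k : ℕ) : Set (Fin (k + 1) → ℝ) := {x | ∀ i, x i = 0 ∨ x i = 1}

noncomputable def ht (k : ℕ) (x : Fin (k + 1) → ℝ) : ℝ :=
  (2 * x (Fin.last k) - 1) * (∑ i : Fin k, x i.castSucc) ^ 2

lemma sum_range_odd (n : ℕ) : ∑ i ∈ Finset.range n, (2 * i + 1) = n ^ 2 := by
  induction n with
  | zero => simp
  | succ n ih => rw [Finset.sum_range_succ, ih]; ring

lemma sum_odd_key (A : Finset ℕ) :
    A.card ^ 2 ≤ ∑ a ∈ A, (2 * a + 1) ∧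
    ((∑ a ∈ A, (2 * a + 1)) = A.card ^ 2 ↔ A = Finset.range A.card) := by
  induction A using Finset.strongInduction with
  | _ A ih =>
    rcases A.eq_empty_or_nonempty with rfl | hA
    · simp
    · set m := A.max' hA with hm
      have hmem : m ∈ A := A.max'_mem hA
      have hsub : A.erase m ⊂ A := Finset.erase_ssubset hmem
      obtain ⟨ih1, ih2⟩ := ih _ hsub
      set e := (A.erase m).card with he
      have hcard : A.card = e + 1 := by
        rw [he, Finset.card_erase_of_mem hmem]
        have := Finset.card_pos.mpr hA
        omega
      have hme : e ≤ m := by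
        have hsub2 : A ⊆ Finset.range (m + 1) := by
          intro a ha
          simp only [Finset.mem_range]
          exact Nat.lt_succ_of_le (A.le_max' a ha)
        have := Finset.card_le_card hsub2
        rw [Finset.card_range] at this
        omega
      have hsum : ∑ a ∈ A.erase m, (2 * a + 1) + (2 * m + 1) = ∑ a ∈ A, (2 * a + 1) :=
        Finset.sum_erase_add A _ hmem
      constructor
      · rw [hcard]; nlinarith [ih1, hme, hsum]
      · constructor
        · intro hEq
          have h1 : ∑ a ∈ A.erase m, (2 * a + 1) = e ^ 2 ∧ m = e := by
            constructor <;> nlinarith [ih1, hme, hsum, hEq, hcard]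
          obtain ⟨h1, h2⟩ := h1
          have hrange : A.erase m = Finset.range e := ih2.mp h1
          have hins : A = insert m (A.erase m) := (Finset.insert_erase hmem).symm
          rw [hcard, Finset.range_add_one, hins, hrange, h2]
        · intro hEq
          rw [hEq, sum_range_odd, Finset.card_range]

/-- The inequality x_{k+1} ≤ Σᵢ (2i−1)·x_{π(i)} is valid on the lifted hypercube,
    with equality exactly at 0, e_last, and e_last + Σ_{i≤t} e_{π(i)} (lifted). -/
theorem staircase_facet_inequality (k : ℕ) (π : Equiv.Perm (Fin k))
    (x : Fin (k + 1) → ℝ) (hx : x ∈ cube k) :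
    ht k x ≤ ∑ i : Fin k, (2 * (i : ℕ) + 1 : ℝ) * x ((π i).castSucc) ∧
    (ht k x = ∑ i : Fin k, (2 * (i : ℕ) + 1 : ℝ) * x ((π i).castSucc) ↔
      (x = 0 ∨ ∃ t : ℕ, t ≤ k ∧ ∀ j : Fin (k + 1),
        x j = if j = Fin.last k then 1
          else if ∃ i : Fin k, (i : ℕ) < t ∧ j = (π i).castSucc then 1 else 0)) := by
  classical
  have hx' : ∀ j, x j = 0 ∨ x j = 1 := hx
  set A : Finset (Fin k) := Finset.univ.filter (fun i => x ((π i).castSucc) = 1) with hA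
  have hmemA : ∀ i : Fin k, i ∈ A ↔ x ((π i).castSucc) = 1 := by
    intro i; simp [hA]
  have hterm : ∀ i : Fin k, x ((π i).castSucc) = if i ∈ A then (1 : ℝ) else 0 := by
    intro i
    rcases hx' ((π i).castSucc) with h | h
    · rw [h, if_neg]; rw [hmemA, h]; norm_num
    · rw [h, if_pos]; rw [hmemA]; exact h
  have hS : (∑ i : Fin k, x i.castSucc) = (A.card : ℝ) := by
    rw [← Equiv.sum_comp π (fun i => x i.castSucc)]
    simp only [hterm]
    rw [Finset.sum_ite_mem, Finset.univ_inter]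
    simp
  set B : Finset ℕ := A.image Fin.val with hB
  have hBcard : B.card = A.card := Finset.card_image_of_injective _ Fin.val_injective
  have hRHS : (∑ i : Fin k, (2 * (i : ℕ) + 1 : ℝ) * x ((π i).castSucc))
      = ((∑ b ∈ B, (2 * b + 1) : ℕ) : ℝ) := by
    rw [hB, Finset.sum_image (fun a _ b _ h => Fin.val_injective h)]
    push_cast
    simp only [hterm, mul_ite, mul_one, mul_zero]
    rw [Finset.sum_ite_mem, Finset.univ_inter]
  obtain ⟨key1, key2⟩ := sum_odd_key B
  rcases hx' (Fin.last k) with h0 | h1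
  · -- x last = 0
    have hht : ht k x = -((A.card : ℝ)) ^ 2 := by
      rw [ht, h0, hS]; ring
    have hN : (0 : ℝ) ≤ ((∑ b ∈ B, (2 * b + 1) : ℕ) : ℝ) := Nat.cast_nonneg _
    constructor
    · rw [hht, hRHS]
      nlinarith [sq_nonneg ((A.card : ℝ))]
    · rw [hht, hRHS]
      constructor
      · intro hEq
        left
        have hsq : ((A.card : ℝ)) ^ 2 = 0 := by nlinarith [sq_nonneg ((A.card : ℝ))]
        have hc0 : A.card = 0 := by
          have : (A.card : ℝ) = 0 := by
            exact pow_eq_zero_iff (n := 2) (by norm_num) |>.mp hsq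
          exact_mod_cast this
        have hAe : A = ∅ := Finset.card_eq_zero.mp hc0
        funext j
        refine Fin.lastCases ?_ ?_ j
        · simpa using h0
        · intro m
          have hna : π.symm m ∉ A := by simp [hAe]
          rw [hmemA] at hna
          rcases hx' ((π (π.symm m)).castSucc) with h | h
          · simpa using h
          · exact absurd h hna
      · rintro (hx0 | ⟨t, htk, hdesc⟩)
        · have hAe : A = ∅ := by
            ext i
            simp [hmemA, hx0]
          rw [hAe] at hB ⊢
          simp [hB]
        · exfalso
          have := hdesc (Fin.last k)
          rw [if_pos rfl, h0] at this
          norm_num at this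
  · -- x last = 1
    have hht : ht k x = ((B.card ^ 2 : ℕ) : ℝ) := by
      rw [ht, h1, hS, ← hBcard]; push_cast; ring
    constructor
    · rw [hht, hRHS]; exact_mod_cast key1
    · rw [hht, hRHS, Nat.cast_inj, eq_comm, key2]
      constructor
      · intro hBr
        right
        refine ⟨A.card, by simpa using Finset.card_le_univ A, ?_⟩
        intro j
        refine Fin.lastCases ?_ ?_ j
        · rw [if_pos rfl]; exact h1
        · intro m
          rw [if_neg (Fin.castSucc_lt_last m).ne]
          have hiff : (∃ i : Fin k, (i : ℕ) < A.card ∧ m.castSucc = (π i).castSucc) ↔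
              ((π.symm m : ℕ) < A.card) := by
            constructor
            · rintro ⟨i, hi, hieq⟩
              have hmi : m = π i := Fin.castSucc_injective _ hieq
              simpa [hmi] using hi
            · intro hlt
              exact ⟨π.symm m, hlt, by simp⟩
          have hmem : π.symm m ∈ A ↔ ((π.symm m : ℕ) < A.card) := by
            constructor
            · intro h
              have hh : (π.symm m : ℕ) ∈ B := Finset.mem_image_of_mem _ h
              rw [hBr, Finset.mem_range, hBcard] at hh
              exact hh
            · intro h
              have hh : (π.symm m : ℕ) ∈ B := by
                rw [hBr, Finset.mem_range, hBcard]; exact h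
              rw [hB, Finset.mem_image] at hh
              obtain ⟨a, ha, hav⟩ := hh
              rwa [← Fin.val_injective hav]
          by_cases hc : (π.symm m : ℕ) < A.card
          · rw [if_pos (hiff.mpr hc)]
            have hh := hmem.mpr hc
            rw [hmemA] at hh
            simpa using hh
          · rw [if_neg (fun hh => hc (hiff.mp hh))]
            have hna : π.symm m ∉ A := fun hh => hc (hmem.mp hh)
            rw [hmemA] at hna
            rcases hx' ((π (π.symm m)).castSucc) with h | h
            · simpa using h
            · exact absurd h hna
      · rintro (hx0 | ⟨t, htk, hdesc⟩)
        · exfalso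
          have := congrFun hx0 (Fin.last k)
          rw [h1] at this
          norm_num at this
        · have hBt : B = Finset.range t := by
            ext b
            simp only [hB, Finset.mem_image, Finset.mem_range]
            constructor
            · rintro ⟨i, hi, rfl⟩
              rw [hmemA] at hi
              have hd := hdesc ((π i).castSucc)
              rw [if_neg (Fin.castSucc_lt_last _).ne, hi] at hd
              by_contra hb
              rw [if_neg] at hd
              · norm_num at hd
              · rintro ⟨i', hi', heq⟩
                have : π i = π i' := Fin.castSucc_injective _ heq
                have hii : i = i' := π.injective this
                exact hb (hii ▸ hi')
            · intro hb
              have hbk : b < k := lt_of_lt_of_le hb htk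
              refine ⟨⟨b, hbk⟩, ?_, rfl⟩
              rw [hmemA]
              have hd := hdesc ((π ⟨b, hbk⟩).castSucc)
              rw [if_neg (Fin.castSucc_lt_last _).ne, if_pos ⟨⟨b, hbk⟩, hb, rfl⟩] at hd
              exact hd
          have hct : B.card = t := by rw [hBt, Finset.card_range]
          rw [hBt, Finset.card_range]
end

section
/- For every k ≥ 2 there exists a family 𝓑 of subsets of [k−1] with |𝓑| ≤ 2^{k+3}·ln(k)/(k+1) such that every subset X ⊆ [k−1] either belongs to 𝓑 or is contained in some B ∈ 𝓑 with |B| = |X| + 1. -/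
open scoped BigOperators


theorem two_pow_sum_inj (A B : Finset ℕ) (h : ∑ a ∈ A, 2^a = ∑ b ∈ B, 2^b) : A = B := by
  have hs : ∀ C : Finset ℕ, ((C.sort (·≤·)).map (fun i => 2^i)).sum = ∑ a ∈ C, 2^a := by
    intro C; rw [← Finset.sum_map_toList]
    exact List.Perm.sum_eq (List.Perm.map _ (Finset.sort_perm_toList (α := ℕ) C (. ≤ .)))
  have h2 : (A.sort (·≤·)) = (B.sort (·≤·)) := by
    rw [← Nat.bitIndices_twoPowsum (Finset.sortedLT_sort A),
      ← Nat.bitIndices_twoPowsum (Finset.sortedLT_sort B), hs, hs, h]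
  have := congrArg List.toFinset h2
  rwa [Finset.sort_toFinset, Finset.sort_toFinset] at this

theorem sum_range_two_pow (t : ℕ) : ∑ i ∈ Finset.range t, 2^i = 2^t - 1 := by
  induction t with
  | zero => simp
  | succ t ih => rw [Finset.sum_range_succ, ih]; have := Nat.one_le_two_pow (n := t); omega

-- base count
theorem base_count (n t : ℕ) (ht : t ≤ n) (w : Fin n → ZMod (2^t))
    (hw : ∀ j : Fin n, (j:ℕ) < t → w j = 2^(j:ℕ)) (c : ZMod (2^t)) :
    ((((Finset.univ.filter (fun j : Fin n => (j:ℕ) < t))).powerset.filter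
      (fun B => ∑ b ∈ B, w b = c)).card) = 1 := by
  haveI : NeZero (2^t) := ⟨pow_ne_zero _ two_ne_zero⟩
  set low := Finset.univ.filter (fun j : Fin n => (j:ℕ) < t) with hlow
  have himg : low.image (Fin.val) = Finset.range t := by
    ext a
    simp only [Finset.mem_image, Finset.mem_range, hlow, Finset.mem_filter, Finset.mem_univ,
      true_and]
    constructor
    · rintro ⟨j, hj, rfl⟩; exact hj
    · intro ha; exact ⟨⟨a, lt_of_lt_of_le ha ht⟩, ha, rfl⟩
  have hlowcard : low.card = t := by
    rw [← Finset.card_image_of_injective low Fin.val_injective, himg, Finset.card_range]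
  set g : Finset (Fin n) → ℕ := fun B => ∑ b ∈ B, 2^(b:ℕ) with hg
  have hgim : ∀ B : Finset (Fin n), g B = ∑ a ∈ B.image Fin.val, 2^a := by
    intro B; rw [Finset.sum_image (by intro x _ y _ h; exact Fin.val_injective h)]
  have hglt : ∀ B ∈ low.powerset, g B < 2^t := by
    intro B hB
    rw [Finset.mem_powerset] at hB
    have : g B ≤ g low := Finset.sum_le_sum_of_subset hB
    have hlowg : g low = 2^t - 1 := by
      rw [hgim, himg, sum_range_two_pow]
    have := Nat.one_le_two_pow (n := t)
    omega
  have hsig : ∀ B ∈ low.powerset, ∑ b ∈ B, w b = ((g B : ℕ) : ZMod (2^t)) := by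
    intro B hB
    rw [Finset.mem_powerset] at hB
    rw [hg]
    push_cast
    refine Finset.sum_congr rfl (fun b hb => ?_)
    have := hB hb
    rw [hlow, Finset.mem_filter] at this
    rw [hw b this.2]
  have hinj : Set.InjOn (fun B => ∑ b ∈ B, w b) low.powerset := by
    intro B1 h1 B2 h2 he
    simp only at he
    rw [hsig B1 h1, hsig B2 h2] at he
    have hnat : g B1 = g B2 := by
      have := congrArg ZMod.val he
      rwa [ZMod.val_cast_of_lt (hglt B1 h1), ZMod.val_cast_of_lt (hglt B2 h2)] at this
    have : B1.image Fin.val = B2.image Fin.val := by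
      apply two_pow_sum_inj
      rw [← hgim, ← hgim, hnat]
    exact Finset.image_injective Fin.val_injective this
  have hcards : (low.powerset.image (fun B => ∑ b ∈ B, w b)).card = 2^t := by
    rw [Finset.card_image_of_injOn hinj, Finset.card_powerset, hlowcard]
  have huniv : low.powerset.image (fun B => ∑ b ∈ B, w b) = Finset.univ := by
    apply Finset.eq_univ_of_card
    rw [hcards, ZMod.card]
  have hmem : c ∈ low.powerset.image (fun B => ∑ b ∈ B, w b) := by
    rw [huniv]; exact Finset.mem_univ c
  rw [Finset.mem_image] at hmem
  obtain ⟨B0, hB0, hB0c⟩ := hmem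
  refine le_antisymm ?_ ?_
  · apply Finset.card_le_one.2
    intro a ha b hb
    rw [Finset.mem_filter] at ha hb
    exact hinj ha.1 hb.1 (ha.2.trans hb.2.symm)
  · rw [Nat.one_le_iff_ne_zero, ← Nat.pos_iff_ne_zero, Finset.card_pos]
    exact ⟨B0, Finset.mem_filter.2 ⟨hB0, hB0c⟩⟩

theorem superset_count (n : ℕ) (W : Finset (Fin n)) :
    ((Finset.univ.filter (fun X : Finset (Fin n) => W ⊆ X)).card) ≤ 2^(n - W.card) := by
  have h := Finset.card_le_card_of_injOn (f := fun X => X \ W)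
    (s := Finset.univ.filter (fun X : Finset (Fin n) => W ⊆ X))
    (t := (Finset.univ \ W).powerset) ?_ ?_
  · calc _ ≤ _ := h
      _ = 2^(n - W.card) := by
        rw [Finset.card_powerset, Finset.card_sdiff_of_subset (Finset.subset_univ W)]
        simp
  · intro X hX
    rw [Finset.mem_coe, Finset.mem_powerset]
    exact Finset.sdiff_subset_sdiff (Finset.subset_univ X) le_rfl
  · intro X1 h1 X2 h2 he
    rw [Finset.coe_filter, Set.mem_setOf_eq] at h1 h2
    have e1 : X1 \ W ∪ W = X1 := Finset.sdiff_union_of_subset h1.2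
    have e2 : X2 \ W ∪ W = X2 := Finset.sdiff_union_of_subset h2.2
    simp only at he
    rw [← e1, ← e2, he]

theorem parity_card (n : ℕ) (hn : 1 ≤ n) (r : ℕ) :
    ((Finset.univ.filter (fun X : Finset (Fin n) => X.card % 2 = r % 2)).card) ≤ 2^(n-1) := by
  classical
  set z : Fin n := ⟨0, hn⟩ with hz
  have hle : (Finset.univ.filter (fun X : Finset (Fin n) => (X.card % 2 = r % 2))).card ≤
      (Finset.univ.filter (fun X : Finset (Fin n) => ¬ (X.card % 2 = r % 2))).card := by
    apply Finset.card_le_card_of_injOn (f := fun X => if z ∈ X then X.erase z else insert z X)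
    · intro X hX
      rw [Finset.mem_coe, Finset.mem_filter] at hX ⊢
      refine ⟨Finset.mem_univ _, ?_⟩
      by_cases hzX : z ∈ X
      · simp only [hzX, if_true]
        rw [Finset.card_erase_of_mem hzX]
        have hc : 1 ≤ X.card := Finset.card_pos.2 ⟨z, hzX⟩
        have := hX.2
        
        omega
      · simp only [hzX, if_false]
        rw [Finset.card_insert_of_notMem hzX]
        have := hX.2
        
        omega
    · intro X1 h1 X2 h2 he
      simp only at he
      by_cases m1 : z ∈ X1 <;> by_cases m2 : z ∈ X2 <;> simp only [m1, m2, if_true, if_false] at he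
      · have := congrArg (insert z) he
        rwa [Finset.insert_erase m1, Finset.insert_erase m2] at this
      · exfalso; have : z ∈ insert z X2 := Finset.mem_insert_self z X2
        rw [← he] at this; exact Finset.notMem_erase z X1 this
      · exfalso; have : z ∈ insert z X1 := Finset.mem_insert_self z X1
        rw [he] at this; exact Finset.notMem_erase z X2 this
      · have := congrArg (fun s => Finset.erase s z) he
        simpa [Finset.erase_insert m1, Finset.erase_insert m2] using this
  have htot : (Finset.univ.filter (fun X : Finset (Fin n) => (X.card % 2 = r % 2))).card +
      (Finset.univ.filter (fun X : Finset (Fin n) => ¬ (X.card % 2 = r % 2))).card = 2^n := by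
    rw [Finset.card_filter_add_card_filter_not]
    simp [Finset.card_univ]
  have h2 : 2^n = 2 * 2^(n-1) := by
    rw [← pow_succ']
    congr 1
    omega
  omega

theorem two_mul_sq_le_two_pow : ∀ L : ℕ, 7 ≤ L → 2*L*L ≤ 2^L := by
  intro L hL
  induction L with
  | zero => omega
  | succ L ih =>
    rcases Nat.lt_or_ge L 7 with h | h
    · have hL6 : L = 6 := by omega
      subst hL6; norm_num
    · have := ih (by omega)
      have h2 : 2*(L+1)*(L+1) ≤ 2*(2*L*L) := by nlinarith
      calc 2*(L+1)*(L+1) ≤ 2*(2*L*L) := h2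
        _ ≤ 2*2^L := by omega
        _ = 2^(L+1) := by ring

theorem fiber_count (n t : ℕ) (ht : t ≤ n) (w : Fin n → ZMod (2^t))
    (hw : ∀ j : Fin n, (j:ℕ) < t → w j = 2^(j:ℕ)) (c : ZMod (2^t)) :
    ((Finset.univ.filter (fun B : Finset (Fin n) => ∑ b ∈ B, w b = c)).card) = 2^(n - t) := by
  set low := Finset.univ.filter (fun j : Fin n => (j:ℕ) < t) with hlow
  have himg : low.image (Fin.val) = Finset.range t := by
    ext a
    simp only [Finset.mem_image, Finset.mem_range, hlow, Finset.mem_filter, Finset.mem_univ,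
      true_and]
    constructor
    · rintro ⟨j, hj, rfl⟩; exact hj
    · intro ha; exact ⟨⟨a, lt_of_lt_of_le ha ht⟩, ha, rfl⟩
  have hlowcard : low.card = t := by
    rw [← Finset.card_image_of_injective low Fin.val_injective, himg, Finset.card_range]
  have claim : ∀ u : Finset (Fin n), Disjoint u low → ∀ c : ZMod (2^t),
      (((low ∪ u).powerset).filter (fun B => ∑ b ∈ B, w b = c)).card = 2^u.card := by
    intro u
    induction u using Finset.induction_on with
    | empty =>
      intro _ c
      simpa using base_count n t ht w hw c
    | @insert x u hx ih =>
      intro hdisj c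
      have hdu : Disjoint u low := by
        exact Finset.disjoint_of_subset_left (Finset.subset_insert x u) hdisj
      have hxlow : x ∉ low := by
        have := Finset.disjoint_left.1 hdisj (Finset.mem_insert_self x u)
        exact this
      have hxu : x ∉ low ∪ u := by
        simp only [Finset.mem_union]
        push_neg
        exact ⟨hxlow, hx⟩
      rw [Finset.union_insert, Finset.powerset_insert, Finset.filter_union]
      have hdisj2 : Disjoint ((low ∪ u).powerset.filter (fun B => ∑ b ∈ B, w b = c))
          (((low ∪ u).powerset.image (insert x)).filter (fun B => ∑ b ∈ B, w b = c)) := by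
        rw [Finset.disjoint_left]
        intro B hB1 hB2
        rw [Finset.mem_filter, Finset.mem_powerset] at hB1
        rw [Finset.mem_filter, Finset.mem_image] at hB2
        obtain ⟨⟨B', hB', rfl⟩, -⟩ := hB2
        exact hxu (hB1.1 (Finset.mem_insert_self x B'))
      rw [Finset.card_union_of_disjoint hdisj2, ih hdu c]
      have himgf : ((low ∪ u).powerset.image (insert x)).filter (fun B => ∑ b ∈ B, w b = c)
          = ((low ∪ u).powerset.filter (fun B => ∑ b ∈ B, w b = c - w x)).image (insert x) := by
        ext B
        simp only [Finset.mem_filter, Finset.mem_image, Finset.mem_powerset]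
        constructor
        · rintro ⟨⟨B', hB', rfl⟩, hsum⟩
          refine ⟨B', ⟨hB', ?_⟩, rfl⟩
          have hxB' : x ∉ B' := fun h => hxu (hB' h)
          rw [Finset.sum_insert hxB'] at hsum
          rw [eq_sub_iff_add_eq, add_comm, hsum]
        · rintro ⟨B', ⟨hB', hsum⟩, rfl⟩
          have hxB' : x ∉ B' := fun h => hxu (hB' h)
          refine ⟨⟨B', hB', rfl⟩, ?_⟩
          rw [Finset.sum_insert hxB', hsum]
          ring
      rw [himgf, Finset.card_image_of_injOn, ih hdu (c - w x)]
      · rw [Finset.card_insert_of_notMem hx]; ring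
      · intro B1 h1 B2 h2 he
        rw [Finset.coe_filter, Set.mem_setOf_eq, Finset.mem_powerset] at h1 h2
        have hx1 : x ∉ B1 := fun h => hxu (h1.1 h)
        have hx2 : x ∉ B2 := fun h => hxu (h2.1 h)
        have := congrArg (fun s => Finset.erase s x) he
        simpa [Finset.erase_insert hx1, Finset.erase_insert hx2] using this
  have := claim lowᶜ (by exact disjoint_compl_left) c
  rw [Finset.union_compl, Finset.powerset_univ, Finset.card_compl, hlowcard] at this
  simpa using this

set_option maxHeartbeats 2000000
/-- There exists a dominating family 𝓑 in the Hasse diagram of the Boolean lattice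
    2^{[k−1]} of size at most 2^{k+3}·ln(k)/(k+1): every X ⊆ [k−1] is either in 𝓑
    or is covered by a member of 𝓑 one level up. -/
theorem dominating_family_boolean_lattice (k : ℕ) (hk : 2 ≤ k) :
    ∃ 𝓑 : Finset (Finset (Fin (k - 1))),
      (𝓑.card : ℝ) ≤ 2 ^ (k + 3) * Real.log k / (k + 1) ∧
      ∀ X : Finset (Fin (k - 1)),
        X ∈ 𝓑 ∨ ∃ B ∈ 𝓑, X ⊆ B ∧ B.card = X.card + 1 := by
  classical
  set n := k - 1 with hn
  have hn1 : 1 ≤ n := by omega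
  have hkpos : (0:ℝ) < k := by positivity
  have hk1pos : (0:ℝ) < (k:ℝ) + 1 := by positivity
  have hlkpos : 0 < Real.log k := Real.log_pos (by exact_mod_cast hk)
  have hln2 : (0.6931471803:ℝ) < Real.log 2 := Real.log_two_gt_d9
  rcases Nat.lt_or_ge k 128 with hsmall | hbig
  · -- parity family
    refine ⟨Finset.univ.filter (fun X : Finset (Fin n) => X.card % 2 = n % 2), ?_, ?_⟩
    · have hcard := parity_card n hn1 n
      have hkey : (k:ℝ) + 1 ≤ 32 * Real.log k := by
        set L := Nat.log 2 k with hL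
        have hL1 : 1 ≤ L := by
          rw [hL]
          rw [Nat.le_log_iff_pow_le (by norm_num) (by omega)]
          omega
        have hL6 : L ≤ 6 := by
          rw [hL]
          by_contra h
          push_neg at h
          have : 2^7 ≤ k := le_trans (Nat.pow_le_pow_right (by norm_num) h) (Nat.pow_log_le_self 2 (by omega))
          omega
        have hk2L : k < 2^(L+1) := Nat.lt_pow_succ_log_self (by norm_num) k
        have h2Lk : 2^L ≤ k := Nat.pow_log_le_self 2 (by omega)
        have hlog : (L:ℝ) * Real.log 2 ≤ Real.log k := by
          rw [← Real.log_pow]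
          apply Real.log_le_log (by positivity)
          exact_mod_cast h2Lk
        have hstep : ((2:ℝ))^(L+1) ≤ 32 * ((L:ℝ) * Real.log 2) := by
          interval_cases L <;>
            (norm_num; nlinarith [hln2])
        calc (k:ℝ) + 1 ≤ (2:ℝ)^(L+1) := by exact_mod_cast hk2L
          _ ≤ 32 * ((L:ℝ) * Real.log 2) := hstep
          _ ≤ 32 * Real.log k := by nlinarith [hlog]
      rw [le_div_iff₀ hk1pos]
      have hc2 : ((Finset.univ.filter (fun X : Finset (Fin n) => X.card % 2 = n % 2)).card : ℝ)
          ≤ (2:ℝ)^(n-1) := by exact_mod_cast hcard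
      have hexp : k + 3 = (n-1) + 5 := by omega
      calc ((Finset.univ.filter (fun X : Finset (Fin n) => X.card % 2 = n % 2)).card : ℝ) * ((k:ℝ)+1)
          ≤ (2:ℝ)^(n-1) * ((k:ℝ)+1) := by
            apply mul_le_mul_of_nonneg_right hc2 (le_of_lt hk1pos)
        _ ≤ (2:ℝ)^(n-1) * (32 * Real.log k) := by
            apply mul_le_mul_of_nonneg_left hkey (by positivity)
        _ = (2:ℝ)^((n-1)+5) * Real.log k := by ring
        _ = (2:ℝ)^(k+3) * Real.log k := by rw [hexp]
    · intro X
      by_cases hX : X.card % 2 = n % 2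
      · exact Or.inl (Finset.mem_filter.2 ⟨Finset.mem_univ _, hX⟩)
      · right
        have hXlt : X.card < n := by
          have := Finset.card_le_card (Finset.subset_univ X)
          rw [Finset.card_univ, Fintype.card_fin] at this
          rcases lt_or_eq_of_le this with h | h
          · exact h
          · exfalso; exact hX (by rw [h])
        have hXne : X ≠ Finset.univ := by
          intro h
          rw [h, Finset.card_univ, Fintype.card_fin] at hXlt
          omega
        obtain ⟨x, hx⟩ : ∃ x, x ∉ X := by
          by_contra h
          push_neg at h
          exact hXne (Finset.eq_univ_of_forall h)
        refine ⟨insert x X, Finset.mem_filter.2 ⟨Finset.mem_univ _, ?_⟩,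
          Finset.subset_insert x X, Finset.card_insert_of_notMem hx⟩
        rw [Finset.card_insert_of_notMem hx]
        omega
  · -- main construction
    set L := Nat.log 2 k with hL
    have hL7 : 7 ≤ L := by
      rw [hL, Nat.le_log_iff_pow_le (by norm_num) (by omega)]
      omega
    have h2Lk : 2^L ≤ k := Nat.pow_log_le_self 2 (by omega)
    have hk2L : k < 2^(L+1) := Nat.lt_pow_succ_log_self (by norm_num) k
    have hLL : 2*L*L ≤ 2^L := two_mul_sq_le_two_pow L hL7
    have hLk : 2*L ≤ k := by nlinarith
    set t := Nat.log 2 (k / (2*L)) with ht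
    have hdiv1 : 1 ≤ k / (2*L) := (Nat.one_le_div_iff (by omega)).2 hLk
    have hm_le : 2^t ≤ k / (2*L) := Nat.pow_log_le_self 2 (by omega)
    have hxlt : k / (2*L) < 2^(t+1) := Nat.lt_pow_succ_log_self (by norm_num) _
    have hmx : 2*L*2^t ≤ k := by
      calc 2*L*2^t ≤ 2*L*(k/(2*L)) := by
            apply Nat.mul_le_mul_left
            exact hm_le
        _ ≤ k := Nat.mul_div_le k (2*L)
    have hk4Lm : k + 1 ≤ 4*L*2^t := by
      have hdm := Nat.div_add_mod k (2*L)
      have hmod : k % (2*L) < 2*L := Nat.mod_lt k (by omega)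
      have hQL : L*(k/(2*L)) + L ≤ 2*(L*2^t) := by
        have : (k/(2*L)) + 1 ≤ 2*2^t := by
          have := hxlt
          have h2 : (2:ℕ)^(t+1) = 2*2^t := by ring
          omega
        calc L*(k/(2*L)) + L = L*((k/(2*L)) + 1) := by ring
          _ ≤ L*(2*2^t) := Nat.mul_le_mul_left L this
          _ = 2*(L*2^t) := by ring
      have he1 : 2*L*(k/(2*L)) = 2*(L*(k/(2*L))) := by ring
      have he2 : 4*L*2^t = 4*(L*2^t) := by ring
      omega
    have htL : t + 3 ≤ L := by
      have h14 : k/(2*L) ≤ k/14 := Nat.div_le_div_left (by omega) (by omega)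
      have h8 : 8*(k/14) ≤ k := by
        calc 8*(k/14) ≤ 8*k/14 := Nat.mul_div_le_mul_div_assoc 8 k 14
          _ ≤ k := Nat.div_le_of_le_mul (by omega)
      have hpow : 2^(t+3) ≤ k := by
        calc (2:ℕ)^(t+3) = 8*2^t := by ring
          _ ≤ 8*(k/(2*L)) := by omega
          _ ≤ 8*(k/14) := by omega
          _ ≤ k := h8
      have : (2:ℕ)^(t+3) < 2^(L+1) := lt_of_le_of_lt hpow hk2L
      have := (Nat.pow_lt_pow_iff_right (a := 2) (by norm_num)).1 this
      omega
    have htn : t ≤ n := by omega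
    haveI : NeZero (2^t) := ⟨pow_ne_zero _ two_ne_zero⟩
    set w : Fin n → ZMod (2^t) := fun j =>
      if (j:ℕ) < t then (2:ZMod (2^t))^(j:ℕ) else (((j:ℕ) - t : ℕ) : ZMod (2^t)) with hw
    have hwlow : ∀ j : Fin n, (j:ℕ) < t → w j = 2^(j:ℕ) := by
      intro j hj; rw [hw]; simp [hj]
    have hwhigh : ∀ j : Fin n, t ≤ (j:ℕ) → w j = (((j:ℕ) - t : ℕ) : ZMod (2^t)) := by
      intro j hj; rw [hw]; simp [Nat.not_lt.2 hj]
    set W : ZMod (2^t) → Finset (Fin n) :=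
      fun r => Finset.univ.filter (fun j => w j = r) with hW
    set M := (n - t) / 2^t with hM
    have hML : 2*L - 2 ≤ M := by
      rw [hM, Nat.le_div_iff_mul_le (Nat.two_pow_pos t)]
      have hL2a : L ≤ 2*2^t := by
        by_contra h
        push_neg at h
        have : 2*L*L < 2*L*(2*2^t) := by
          calc 2*L*L ≤ 2^L := hLL
            _ ≤ k := h2Lk
            _ < 4*L*2^t := by omega
            _ = 2*L*(2*2^t) := by ring
        have := Nat.lt_of_mul_lt_mul_left this
        omega
      have e1 : (2*L-2)*2^t + 2*2^t = 2*L*2^t := by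
        have h2 : (2*L-2) + 2 = 2*L := by omega
        calc (2*L-2)*2^t + 2*2^t = ((2*L-2)+2)*2^t := by ring
          _ = 2*L*2^t := by rw [h2]
      have hpos : 1 ≤ 2^t := Nat.one_le_two_pow
      omega
    have hMn : M ≤ n := le_trans (Nat.div_le_self _ _) (Nat.sub_le n t)
    have hDn : 2*L - 2 ≤ n := by
      have : 2*L ≤ 2*L*L := by nlinarith
      omega
    -- cardinality of W r
    have hWcard : ∀ r : ZMod (2^t), M ≤ (W r).card := by
      intro r
      have hnpos : 0 < n := by omega
      rw [← Finset.card_range M]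
      apply Finset.card_le_card_of_injOn
        (f := fun q => (⟨(t + (q*2^t + r.val)) % n, Nat.mod_lt _ hnpos⟩ : Fin n))
      · intro q hq
        rw [Finset.mem_coe, Finset.mem_range] at hq
        have hrv : r.val < 2^t := ZMod.val_lt r
        have hlt : q*2^t + r.val < M*2^t := by
          have : (q+1)*2^t ≤ M*2^t := Nat.mul_le_mul_right _ (by omega)
          have he : (q+1)*2^t = q*2^t + 2^t := by ring
          omega
        have hMt : M*2^t ≤ n - t := Nat.div_mul_le_self _ _
        have hval : t + (q*2^t + r.val) < n := by omega
        rw [Finset.mem_coe, hW, Finset.mem_filter]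
        refine ⟨Finset.mem_univ _, ?_⟩
        beta_reduce
        have hvv : ((⟨(t + (q*2^t + r.val)) % n, Nat.mod_lt _ hnpos⟩ : Fin n) : ℕ)
            = t + (q*2^t + r.val) := Nat.mod_eq_of_lt hval
        rw [hwhigh _ (by omega), hvv]
        have hsub : t + (q*2^t + r.val) - t = q*2^t + r.val := by omega
        rw [hsub]
        have h2t : ((2:ZMod (2^t)))^t = 0 := by
          have h := ZMod.natCast_self (2^t)
          push_cast at h
          exact h
        push_cast
        rw [h2t, mul_zero, zero_add]
        exact ZMod.natCast_rightInverse r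
      · intro q1 h1 q2 h2 he
        rw [Finset.mem_coe, Finset.mem_range] at h1 h2
        have hrv : r.val < 2^t := ZMod.val_lt r
        have hMt : M*2^t ≤ n - t := Nat.div_mul_le_self _ _
        have hv1 : q1*2^t + r.val < M*2^t := by
          have : (q1+1)*2^t ≤ M*2^t := Nat.mul_le_mul_right _ (by omega)
          have he' : (q1+1)*2^t = q1*2^t + 2^t := by ring
          omega
        have hv2 : q2*2^t + r.val < M*2^t := by
          have : (q2+1)*2^t ≤ M*2^t := Nat.mul_le_mul_right _ (by omega)
          have he' : (q2+1)*2^t = q2*2^t + 2^t := by ring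
          omega
        have hval1 : t + (q1*2^t + r.val) < n := by omega
        have hval2 : t + (q2*2^t + r.val) < n := by omega
        have := congrArg Fin.val he
        simp only [Nat.mod_eq_of_lt hval1, Nat.mod_eq_of_lt hval2] at this
        have hq : q1*2^t = q2*2^t := by omega
        exact Nat.eq_of_mul_eq_mul_right (Nat.two_pow_pos t) hq
    -- the family
    clear_value n L t M
    set fib := Finset.univ.filter (fun B : Finset (Fin n) => ∑ b ∈ B, w b = 0) with hfib
    set bad := Finset.univ.filter
      (fun X : Finset (Fin n) => ¬ (∑ b ∈ X, w b = 0) ∧ W (-(∑ b ∈ X, w b)) ⊆ X) with hbad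
    refine ⟨fib ∪ bad, ?_, ?_⟩
    · -- cardinality bound
      have hfibcard : fib.card = 2^(n-t) := fiber_count n t htn w hwlow 0
      have hbadcard : bad.card ≤ 2^t * 2^(n-M) := by
        have hsub : bad ⊆ Finset.univ.biUnion
            (fun r : ZMod (2^t) => Finset.univ.filter (fun X : Finset (Fin n) => W r ⊆ X)) := by
          intro X hX
          rw [hbad, Finset.mem_filter] at hX
          rw [Finset.mem_biUnion]
          exact ⟨-(∑ b ∈ X, w b), Finset.mem_univ _,
            Finset.mem_filter.2 ⟨Finset.mem_univ _, hX.2.2⟩⟩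
        calc bad.card ≤ _ := Finset.card_le_card hsub
          _ ≤ ∑ r : ZMod (2^t),
              (Finset.univ.filter (fun X : Finset (Fin n) => W r ⊆ X)).card :=
            Finset.card_biUnion_le
          _ ≤ ∑ _r : ZMod (2^t), 2^(n-M) := by
            apply Finset.sum_le_sum
            intro r _
            calc (Finset.univ.filter (fun X : Finset (Fin n) => W r ⊆ X)).card
                ≤ 2^(n - (W r).card) := superset_count n (W r)
              _ ≤ 2^(n-M) := Nat.pow_le_pow_right (by norm_num)
                  (Nat.sub_le_sub_left (hWcard r) n)
          _ = 2^t * 2^(n-M) := by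
            rw [Finset.sum_const, Finset.card_univ, ZMod.card, smul_eq_mul]
      have htot : ((fib ∪ bad).card : ℝ) ≤ (2:ℝ)^(n-t) + (2:ℝ)^t * (2:ℝ)^(n-M) := by
        have h1 : (fib ∪ bad).card ≤ 2^(n-t) + 2^t * 2^(n-M) := by
          calc (fib ∪ bad).card ≤ fib.card + bad.card := Finset.card_union_le fib bad
            _ ≤ 2^(n-t) + 2^t * 2^(n-M) := by omega
        calc ((fib ∪ bad).card : ℝ) ≤ ((2^(n-t) + 2^t * 2^(n-M) : ℕ) : ℝ) := by exact_mod_cast h1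
          _ = (2:ℝ)^(n-t) + (2:ℝ)^t * (2:ℝ)^(n-M) := by push_cast; ring
      rw [le_div_iff₀ hk1pos]
      have hlog2L : (L:ℝ) * Real.log 2 ≤ Real.log k := by
        rw [← Real.log_pow]
        apply Real.log_le_log (by positivity)
        exact_mod_cast h2Lk
      have hLlk : (L:ℝ) ≤ 2 * Real.log k := by nlinarith [(Nat.one_le_cast (α := ℝ)).2 (by omega : 1 ≤ L)]
      have hA1 : (2:ℝ)^(n-t) * ((k:ℝ)+1) ≤ 8 * Real.log k * (2:ℝ)^n := by
        have hc : ((k:ℝ)+1) ≤ 4*(L:ℝ)*(2:ℝ)^t := by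
          have : ((k+1:ℕ):ℝ) ≤ ((4*L*2^t : ℕ):ℝ) := Nat.cast_le.2 hk4Lm
          push_cast at this
          linarith
        have hpow : (2:ℝ)^(n-t) * (2:ℝ)^t = (2:ℝ)^n := by
          rw [← pow_add]
          congr 1
          omega
        calc (2:ℝ)^(n-t) * ((k:ℝ)+1) ≤ (2:ℝ)^(n-t) * (4*(L:ℝ)*(2:ℝ)^t) := by
              apply mul_le_mul_of_nonneg_left hc (by positivity)
          _ = 4*(L:ℝ) * ((2:ℝ)^(n-t) * (2:ℝ)^t) := by ring
          _ = 4*(L:ℝ) * (2:ℝ)^n := by rw [hpow]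
          _ ≤ 8 * Real.log k * (2:ℝ)^n := by nlinarith [pow_pos (by norm_num : (0:ℝ) < 2) n]
      have hA2 : ((2:ℝ)^t * (2:ℝ)^(n-M)) * ((k:ℝ)+1) ≤ 8 * Real.log k * (2:ℝ)^n := by
        have hLpos : (0:ℝ) < 2*(L:ℝ) := by positivity
        rw [← mul_le_mul_iff_of_pos_left hLpos]
        have hc1 : (2:ℝ)^(n-M) ≤ (2:ℝ)^(n-(2*L-2)) :=
          pow_le_pow_right₀ (by norm_num) (Nat.sub_le_sub_left hML n)
        have hc2 : ((k:ℝ)+1) ≤ (2:ℝ)^(L+1) := by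
          have : ((k:ℕ):ℝ) < ((2^(L+1) : ℕ):ℝ) := by exact_mod_cast hk2L
          push_cast at this
          have hk1 : ((k:ℝ)+1) ≤ (2:ℝ)^(L+1) := by
            have hnat : k + 1 ≤ 2^(L+1) := hk2L
            exact_mod_cast hnat
          exact hk1
        have hc3 : 2*(L:ℝ)*(2:ℝ)^t ≤ (2:ℝ)^(L+1) := by
          have : ((2*L*2^t : ℕ):ℝ) ≤ ((k:ℕ):ℝ) := Nat.cast_le.2 hmx
          push_cast at this
          calc 2*(L:ℝ)*(2:ℝ)^t ≤ (k:ℝ) := by linarith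
            _ ≤ (2:ℝ)^(L+1) := by linarith
        have hpows : (2:ℝ)^(n-(2*L-2)) * (2:ℝ)^(L+1) * (2:ℝ)^(L+1) = 16*(2:ℝ)^n := by
          rw [← pow_add, ← pow_add]
          have he : n-(2*L-2) + (L+1) + (L+1) = n + 4 := by omega
          rw [he, pow_add]
          ring
        have hLlk1 : (1:ℝ) ≤ (L:ℝ) * Real.log k := by
          have hl1 : (1:ℝ) ≤ (L:ℝ) := by exact_mod_cast (by omega : 1 ≤ L)
          have hl2 : (1:ℝ) ≤ Real.log k := by
            have hl7 : (7:ℝ) ≤ (L:ℝ) := by exact_mod_cast hL7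
            nlinarith [hlog2L, hln2, hl7]
          nlinarith
        calc 2*(L:ℝ) * (((2:ℝ)^t * (2:ℝ)^(n-M)) * ((k:ℝ)+1))
            = (2*(L:ℝ)*(2:ℝ)^t) * ((2:ℝ)^(n-M) * ((k:ℝ)+1)) := by ring
          _ ≤ (2:ℝ)^(L+1) * ((2:ℝ)^(n-(2*L-2)) * (2:ℝ)^(L+1)) := by
              apply mul_le_mul hc3
              · apply mul_le_mul hc1 hc2 (by positivity) (by positivity)
              · positivity
              · positivity
          _ = (2:ℝ)^(n-(2*L-2)) * (2:ℝ)^(L+1) * (2:ℝ)^(L+1) := by ring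
          _ = 16*(2:ℝ)^n := hpows
          _ ≤ 2*(L:ℝ) * (8 * Real.log k * (2:ℝ)^n) := by
              nlinarith [pow_pos (by norm_num : (0:ℝ) < 2) n, hLlk1]
      have hfin : (2:ℝ)^(k+3) = 16 * (2:ℝ)^n := by
        have : k + 3 = n + 4 := by omega
        rw [this, pow_add]
        ring
      calc ((fib ∪ bad).card : ℝ) * ((k:ℝ)+1)
          ≤ ((2:ℝ)^(n-t) + (2:ℝ)^t * (2:ℝ)^(n-M)) * ((k:ℝ)+1) := by
            apply mul_le_mul_of_nonneg_right htot (le_of_lt hk1pos)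
        _ = (2:ℝ)^(n-t) * ((k:ℝ)+1) + ((2:ℝ)^t * (2:ℝ)^(n-M)) * ((k:ℝ)+1) := by ring
        _ ≤ 8 * Real.log k * (2:ℝ)^n + 8 * Real.log k * (2:ℝ)^n := by linarith [hA1, hA2]
        _ = 16 * (2:ℝ)^n * Real.log k := by ring
        _ = (2:ℝ)^(k+3) * Real.log k := by rw [hfin]
    · -- covering
      intro X
      by_cases h0 : ∑ b ∈ X, w b = 0
      · exact Or.inl (Finset.mem_union_left _ (Finset.mem_filter.2 ⟨Finset.mem_univ _, h0⟩))
      · by_cases hWX : W (-(∑ b ∈ X, w b)) ⊆ X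
        · exact Or.inl (Finset.mem_union_right _
            (Finset.mem_filter.2 ⟨Finset.mem_univ _, h0, hWX⟩))
        · right
          obtain ⟨x, hxW, hxX⟩ := Finset.not_subset.1 hWX
          refine ⟨insert x X, Finset.mem_union_left _ (Finset.mem_filter.2
            ⟨Finset.mem_univ _, ?_⟩), Finset.subset_insert x X,
            Finset.card_insert_of_notMem hxX⟩
          rw [Finset.sum_insert hxX]
          rw [hW, Finset.mem_filter] at hxW
          rw [hxW.2]
          ring
end
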